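/- Let n ≥ 1, let ζ ∈ 𝒰 with parametrized coordinates [z,t,h] (h > 0), and let A ⊆ ℍₙ be a set containing the ball B([z,t], h^{1/2}). Then the Poisson integral of the indicator of A is bounded below: ∫_{Ψ⁻¹(A)} P(ζ,ω) dH_{2n+1}(ω) ≥ c > 0, where c depends only on n. In particular, the Poisson measure of the 'shadow ball' B([z,t],h^{1/2}) as seen from ζ is bounded below by a dimensional constant. -/

import Mathlib

open MeasureTheory Complex

noncomputable section

/-- Twisted imaginary part Im(z·w̄) on ℂⁿ. -/
def hIm {n : ℕ} (z w : Fin n → ℂ) : ℝ := ∑ i, (z i * (starRingEnd ℂ) (w i)).im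

/-- Squared Euclidean norm |z|² on ℂⁿ. -/
def nsq {n : ℕ} (z : Fin n → ℂ) : ℝ := ∑ i, ‖z i‖ ^ 2

/-- Folland–Kaplan gauge distance on ℍₙ = ℂⁿ × ℝ: d([z,t],[w,s]) = d([z,t]·[w,s]⁻¹),
    i.e. d([z,t],[w,s])⁴ = (1/16)|z−w|⁴ + (t−s+½Im(z·w̄))². -/
def hGauge {n : ℕ} (x y : (Fin n → ℂ) × ℝ) : ℝ :=
  ((1 / 16) * nsq (x.1 - y.1) ^ 2 + (x.2 - y.2 + (1 / 2) * hIm x.1 y.1) ^ 2) ^ ((1 : ℝ) / 4)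

/-- Fourth power of the parametrized gauge d([z,t,h],[w,s])⁴. -/
def dParam4 {n : ℕ} (z : Fin n → ℂ) (t h : ℝ) (w : Fin n → ℂ) (s : ℝ) : ℝ :=
  ((1 / 4) * nsq (z - w) + 4 * h) ^ 2 + (t - s + (1 / 2) * hIm z w) ^ 2

lemma nsq_nonneg {n : ℕ} (z : Fin n → ℂ) : 0 ≤ nsq z := by
  unfold nsq; positivity

lemma nsq_sub_comm {n : ℕ} (z w : Fin n → ℂ) : nsq (z - w) = nsq (w - z) := by
  unfold nsq
  refine Finset.sum_congr rfl fun i _ => ?_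
  rw [Pi.sub_apply, Pi.sub_apply, ← norm_neg, neg_sub]

lemma hIm_sub_self {n : ℕ} (z w : Fin n → ℂ) : hIm z w = hIm z (w - z) := by
  unfold hIm
  refine Finset.sum_congr rfl fun i _ => ?_
  simp [map_sub, mul_sub, Complex.mul_conj]

lemma hIm_sq_le {n : ℕ} (z u : Fin n → ℂ) : (hIm z u) ^ 2 ≤ nsq z * nsq u := by
  have h1 : |hIm z u| ≤ ∑ i, ‖z i‖ * ‖u i‖ := by
    refine (Finset.abs_sum_le_sum_abs _ _).trans (Finset.sum_le_sum fun i _ => ?_)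
    calc |(z i * (starRingEnd ℂ) (u i)).im| ≤ ‖z i * (starRingEnd ℂ) (u i)‖ :=
          Complex.abs_im_le_norm _
      _ = ‖z i‖ * ‖u i‖ := by rw [norm_mul, Complex.norm_conj]
  have h2 : (hIm z u) ^ 2 ≤ (∑ i, ‖z i‖ * ‖u i‖) ^ 2 := by
    rw [← _root_.sq_abs]
    exact pow_le_pow_left₀ (abs_nonneg _) h1 2
  refine h2.trans ?_
  exact Finset.sum_mul_sq_le_sq_mul_sq Finset.univ _ _

section bounds
variable {n : ℕ} (z : Fin n → ℂ) (t h : ℝ) (w : Fin n → ℂ) (s : ℝ)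

lemma dParam4_ge_h (hh : 0 ≤ h) : 16 * h ^ 2 ≤ dParam4 z t h w s := by
  have h1 := nsq_nonneg (z - w)
  unfold dParam4; nlinarith [sq_nonneg (t - s + (1/2) * hIm z w), sq_nonneg (nsq (z - w))]

lemma dParam4_ge_nsq (hh : 0 ≤ h) : 4 * h * nsq (z - w) ≤ dParam4 z t h w s := by
  have h1 := nsq_nonneg (z - w)
  unfold dParam4
  nlinarith [sq_nonneg (t - s + (1/2) * hIm z w), sq_nonneg ((1/4) * nsq (z - w) - 4 * h)]

lemma dParam4_ge_s : (t - s + (1 / 2) * hIm z w) ^ 2 ≤ dParam4 z t h w s := by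
  unfold dParam4; nlinarith [sq_nonneg ((1/4) * nsq (z - w) + 4 * h)]

lemma dParam4_pos (hh : 0 < h) : 0 < dParam4 z t h w s :=
  lt_of_lt_of_le (by positivity) (dParam4_ge_h z t h w s hh.le)

lemma continuous_dParam4 : Continuous fun p : (Fin n → ℂ) × ℝ => dParam4 z t h p.1 p.2 := by
  unfold dParam4 nsq hIm
  have h1 : Continuous fun p : (Fin n → ℂ) × ℝ => ∑ i, ‖(z - p.1) i‖ ^ 2 := by
    refine continuous_finset_sum _ fun i _ => ?_
    exact ((continuous_norm.comp (by fun_prop)).pow 2)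
  have h2 : Continuous fun p : (Fin n → ℂ) × ℝ => ∑ i, (z i * (starRingEnd ℂ) (p.1 i)).im := by
    refine continuous_finset_sum _ fun i _ => ?_
    exact Complex.continuous_im.comp
      ((continuous_const.mul (Complex.continuous_conj.comp ((continuous_apply i).comp continuous_fst))))
  fun_prop

end bounds

lemma pi_norm_sq_le_nsq {n : ℕ} (u : Fin n → ℂ) : ‖u‖ ^ 2 ≤ nsq u := by
  have hb : ‖u‖ ≤ Real.sqrt (nsq u) := by
    refine (pi_norm_le_iff_of_nonneg (Real.sqrt_nonneg _)).mpr fun i => ?_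
    rw [Real.le_sqrt (norm_nonneg _) (nsq_nonneg u)]
    unfold nsq
    have : ‖u i‖ ^ 2 = ‖u i‖ ^ 2 := rfl
    rw [this]
    exact Finset.single_le_sum (f := fun j => ‖u j‖ ^ 2)
      (fun j _ => by positivity) (Finset.mem_univ i)
  calc ‖u‖ ^ 2 ≤ Real.sqrt (nsq u) ^ 2 := pow_le_pow_left₀ (norm_nonneg _) hb 2
    _ = nsq u := Real.sq_sqrt (nsq_nonneg u)

lemma key_arith (h nz nu a σ m D : ℝ) (hh : 0 < h) (hnz : 0 ≤ nz) (hnu : 0 ≤ nu)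
    (ha : 0 ≤ a) (hu2 : a^2 ≤ nu)
    (h16 : 16*h^2 ≤ D) (hnq : 4*h*nu ≤ D) (hs2 : ((1/2)*m - σ)^2 ≤ D)
    (hc : m^2 ≤ nz*nu) :
    (1 + max a |σ|)^2 ≤ (3 * (1/(16*h^2) + 1/(4*h) + 2 + nz/(8*h))) * D := by
  have hDpos : 0 < D := lt_of_lt_of_le (by positivity) h16
  have hstep : (1 + max a |σ|)^2 ≤ 3*(1 + nu + σ^2) := by
    have hmax : max a |σ| ≤ a + |σ| :=
      max_le (le_add_of_nonneg_right (abs_nonneg _)) (le_add_of_nonneg_left ha)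
    have h1 : (1 + max a |σ|)^2 ≤ (1 + (a + |σ|))^2 := by
      apply pow_le_pow_left₀ (by positivity) (by linarith)
    refine h1.trans ?_
    nlinarith [sq_nonneg (1-a), sq_nonneg (1-|σ|), sq_nonneg (a-|σ|), _root_.sq_abs σ, abs_nonneg σ]
  have hb1 : 1 ≤ D/(16*h^2) := (one_le_div (by positivity)).mpr h16
  have hb2 : nu ≤ D/(4*h) := (le_div_iff₀ (by positivity)).mpr (by linarith)
  have hb3 : σ^2 ≤ 2*D + nz*D/(8*h) := by
    have h1 : σ^2 ≤ 2*((1/2)*m - σ)^2 + (1/2)*m^2 := by nlinarith [sq_nonneg (σ - m)]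
    have h2 : (1/2)*(nz*nu) ≤ nz*D/(8*h) := by
      rw [le_div_iff₀ (by positivity : (0:ℝ) < 8*h)]
      nlinarith [mul_le_mul_of_nonneg_left hnq hnz]
    nlinarith
  have hKD : (3 * (1/(16*h^2) + 1/(4*h) + 2 + nz/(8*h))) * D
      = 3 * (D/(16*h^2) + D/(4*h) + (2*D + nz*D/(8*h))) := by field_simp; ring
  rw [hKD]; linarith

lemma key_bound {n : ℕ} (z : Fin n → ℂ) (t h : ℝ) (hh : 0 < h) (p : (Fin n → ℂ) × ℝ) :
    (1 + ‖p - (z, t)‖) ^ 2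
      ≤ (3 * (1/(16*h^2) + 1/(4*h) + 2 + nsq z/(8*h))) * dParam4 z t h p.1 p.2 := by
  obtain ⟨w, s⟩ := p
  have hnorm : ‖(w, s) - (z, t)‖ = max ‖w - z‖ |s - t| := by
    simp [Prod.norm_def, Real.norm_eq_abs]
  rw [hnorm]
  have hnq : 4*h*nsq (w - z) ≤ dParam4 z t h w s := by
    rw [← nsq_sub_comm]; exact dParam4_ge_nsq z t h w s hh.le
  have hs2 : ((1/2) * hIm z w - (s - t))^2 ≤ dParam4 z t h w s := by
    have := dParam4_ge_s z t h w s
    have he : t - s + (1 / 2) * hIm z w = (1/2) * hIm z w - (s - t) := by ring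
    rwa [he] at this
  have hc : (hIm z w)^2 ≤ nsq z * nsq (w - z) := by
    rw [hIm_sub_self]; exact hIm_sq_le z (w - z)
  exact key_arith h (nsq z) (nsq (w - z)) ‖w - z‖ (s - t) (hIm z w) _ hh
    (nsq_nonneg z) (nsq_nonneg _) (norm_nonneg _) (pi_norm_sq_le_nsq _)
    (dParam4_ge_h z t h w s hh.le) hnq hs2 hc

lemma integrable_poisson {n : ℕ} (z : Fin n → ℂ) (t h : ℝ) (hh : 0 < h) :
    Integrable (fun p : (Fin n → ℂ) × ℝ => h ^ (n+1) / dParam4 z t h p.1 p.2 ^ (n+1)) := by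
  haveI : (volume : Measure ((Fin n → ℂ) × ℝ)).IsAddHaarMeasure := by
    rw [MeasureTheory.Measure.volume_eq_prod]; exact Measure.prod.instIsAddHaarMeasure _ _
  set K : ℝ := 3 * (1/(16*h^2) + 1/(4*h) + 2 + nsq z/(8*h)) with hK
  have hKpos : 0 < K := by
    have := nsq_nonneg z
    rw [hK]; positivity
  have hfrank : (Module.finrank ℝ ((Fin n → ℂ) × ℝ) : ℝ) < (2*(n+1) : ℝ) := by
    have : Module.finrank ℝ ((Fin n → ℂ) × ℝ) = 2*n+1 := by
      simp [Module.finrank_prod, Module.finrank_pi_fintype, Complex.finrank_real_complex]; ring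
    rw [this]; push_cast; linarith
  have hint : Integrable (fun p : (Fin n → ℂ) × ℝ =>
      (h^(n+1) * K^(n+1)) * (1 + ‖p - (z, t)‖) ^ (-(2*(n+1) : ℝ))) :=
    ((integrable_one_add_norm hfrank).comp_sub_right (z, t)).const_mul _
  have hcont : Continuous fun p : (Fin n → ℂ) × ℝ => h ^ (n+1) / dParam4 z t h p.1 p.2 ^ (n+1) := by
    refine continuous_const.div (((continuous_dParam4 z t h)).pow _) fun p => ?_
    exact pow_ne_zero _ (dParam4_pos z t h p.1 p.2 hh).ne'
  refine hint.mono' hcont.aestronglyMeasurable (Filter.Eventually.of_forall fun p => ?_)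
  have hDpos := dParam4_pos z t h p.1 p.2 hh
  have h1pos : (0:ℝ) < 1 + ‖p - (z, t)‖ := by positivity
  have hpow : (1 + ‖p - (z, t)‖) ^ (-(2*(n+1) : ℝ))
      = ((1 + ‖p - (z, t)‖) ^ (2*(n+1) : ℕ))⁻¹ := by
    rw [Real.rpow_neg h1pos.le, ← Real.rpow_natCast (1 + ‖p - (z, t)‖) (2*(n+1))]
    push_cast
    ring_nf
  have hb : (1 + ‖p - (z, t)‖) ^ (2*(n+1) : ℕ) ≤ K^(n+1) * dParam4 z t h p.1 p.2 ^ (n+1) := by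
    have := key_bound z t h hh p
    calc (1 + ‖p - (z, t)‖) ^ (2*(n+1) : ℕ) = ((1 + ‖p - (z, t)‖) ^ 2) ^ (n+1) := by
          rw [← pow_mul]
      _ ≤ (K * dParam4 z t h p.1 p.2) ^ (n+1) := pow_le_pow_left₀ (by positivity) this _
      _ = K^(n+1) * dParam4 z t h p.1 p.2 ^ (n+1) := mul_pow _ _ _
  rw [Real.norm_eq_abs, _root_.abs_of_nonneg (by positivity), hpow]
  rw [div_le_iff₀ (by positivity)]
  have h2 : h^(n+1) * ((1 + ‖p - (z, t)‖) ^ (2*(n+1) : ℕ))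
      ≤ h^(n+1) * (K^(n+1) * dParam4 z t h p.1 p.2 ^ (n+1)) :=
    mul_le_mul_of_nonneg_left hb (by positivity)
  calc h^(n+1) = (h^(n+1) * (1 + ‖p - (z, t)‖) ^ (2*(n+1) : ℕ)) *
        ((1 + ‖p - (z, t)‖) ^ (2*(n+1) : ℕ))⁻¹ := by
        field_simp
    _ ≤ (h^(n+1) * (K^(n+1) * dParam4 z t h p.1 p.2 ^ (n+1))) *
        ((1 + ‖p - (z, t)‖) ^ (2*(n+1) : ℕ))⁻¹ := by
        apply mul_le_mul_of_nonneg_right h2 (by positivity)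
    _ = h^(n+1) * K^(n+1) * ((1 + ‖p - (z, t)‖) ^ (2*(n+1) : ℕ))⁻¹ *
        dParam4 z t h p.1 p.2 ^ (n+1) := by ring

lemma continuous_hIm {n : ℕ} (z : Fin n → ℂ) : Continuous fun w : Fin n → ℂ => hIm z w := by
  unfold hIm
  refine continuous_finset_sum _ fun i _ => ?_
  exact Complex.continuous_im.comp
    ((continuous_const.mul (Complex.continuous_conj.comp (continuous_apply i))))

/-- The inner "box" set. -/

def Tset {n : ℕ} (z : Fin n → ℂ) (t h : ℝ) : Set ((Fin n → ℂ) × ℝ) :=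
  {p | (∀ i, p.1 i ∈ Metric.ball (z i) (Real.sqrt (h / n))) ∧
    p.2 ∈ Set.Ioo (t + (1/2)*hIm z p.1 - h/2) (t + (1/2)*hIm z p.1 + h/2)}

lemma measurableSet_Tset {n : ℕ} (z : Fin n → ℂ) (t h : ℝ) :
    MeasurableSet (Tset z t h) := by
  have h1 : MeasurableSet {p : (Fin n → ℂ) × ℝ |
      ∀ i, p.1 i ∈ Metric.ball (z i) (Real.sqrt (h / n))} := by
    rw [show {p : (Fin n → ℂ) × ℝ | ∀ i, p.1 i ∈ Metric.ball (z i) (Real.sqrt (h / n))}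
        = Prod.fst ⁻¹' (Set.univ.pi fun i => Metric.ball (z i) (Real.sqrt (h / n))) by
      ext p; simp [Set.mem_univ_pi]]
    exact (MeasurableSet.univ_pi fun i => measurableSet_ball).preimage measurable_fst
  have hc : Continuous fun p : (Fin n → ℂ) × ℝ => t + (1/2)*hIm z p.1 :=
    continuous_const.add (continuous_const.mul ((continuous_hIm z).comp continuous_fst))
  have h2 : MeasurableSet {p : (Fin n → ℂ) × ℝ | t + (1/2)*hIm z p.1 - h/2 < p.2} :=
    measurableSet_lt (hc.sub continuous_const).measurable measurable_snd
  have h3 : MeasurableSet {p : (Fin n → ℂ) × ℝ | p.2 < t + (1/2)*hIm z p.1 + h/2} :=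
    measurableSet_lt measurable_snd (hc.add continuous_const).measurable
  have : Tset z t h = ({p : (Fin n → ℂ) × ℝ |
      ∀ i, p.1 i ∈ Metric.ball (z i) (Real.sqrt (h / n))} ∩
      ({p | t + (1/2)*hIm z p.1 - h/2 < p.2} ∩ {p | p.2 < t + (1/2)*hIm z p.1 + h/2})) := by
    ext p; simp [Tset, Set.mem_Ioo, and_assoc]
  rw [this]
  exact h1.inter (h2.inter h3)

lemma volume_Tset {n : ℕ} (z : Fin n → ℂ) (t h : ℝ) (hh : 0 < h) :
    volume (Tset z t h) = ENNReal.ofReal h * (ENNReal.ofReal (h/n) * NNReal.pi)^n := by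
  rw [MeasureTheory.Measure.volume_eq_prod, Measure.prod_apply (measurableSet_Tset z t h)]
  have hsec : ∀ w : Fin n → ℂ, volume (Prod.mk w ⁻¹' Tset z t h) =
      (Set.univ.pi fun i => Metric.ball (z i) (Real.sqrt (h / n))).indicator
        (fun _ => ENNReal.ofReal h) w := by
    intro w
    by_cases hw : w ∈ (Set.univ.pi fun i => Metric.ball (z i) (Real.sqrt (h / n)))
    · have he : Prod.mk w ⁻¹' Tset z t h
          = Set.Ioo (t + (1/2)*hIm z w - h/2) (t + (1/2)*hIm z w + h/2) := by
        ext s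
        simp only [Tset, Set.mem_preimage, Set.mem_setOf_eq, Set.mem_Ioo]
        rw [Set.mem_univ_pi] at hw
        exact ⟨fun hx => hx.2, fun hx => ⟨fun i => hw i, hx⟩⟩
      rw [he, Real.volume_Ioo, Set.indicator_of_mem hw]
      congr 1; ring
    · have he : Prod.mk w ⁻¹' Tset z t h = ∅ := by
        ext s
        simp only [Tset, Set.mem_preimage, Set.mem_setOf_eq, Set.mem_empty_iff_false,
          iff_false, not_and]
        intro hall
        exact absurd (Set.mem_univ_pi.mpr fun i => hall i) hw
      rw [he, measure_empty, Set.indicator_of_notMem hw]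
  rw [lintegral_congr hsec,
    lintegral_indicator (MeasurableSet.univ_pi fun i => measurableSet_ball),
    setLIntegral_const, MeasureTheory.volume_pi_pi]
  have hr : ∀ i : Fin n, volume (Metric.ball (z i) (Real.sqrt (h / n)))
      = ENNReal.ofReal (h/n) * NNReal.pi := by
    intro i
    rw [Complex.volume_ball, ← ENNReal.ofReal_pow (Real.sqrt_nonneg _),
      Real.sq_sqrt (by positivity)]
  simp only [hr, Finset.prod_const, Finset.card_univ, Fintype.card_fin]

lemma Tset_bounds {n : ℕ} (hn : 1 ≤ n) (z : Fin n → ℂ) (t h : ℝ) (hh : 0 < h)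
    {p : (Fin n → ℂ) × ℝ} (hp : p ∈ Tset z t h) :
    nsq (z - p.1) ≤ h ∧ (t - p.2 + (1/2)*hIm z p.1)^2 ≤ h^2/4 := by
  obtain ⟨w, s⟩ := p
  obtain ⟨hw, hs⟩ := hp
  have hnpos : (0:ℝ) < n := by exact_mod_cast hn
  constructor
  · unfold nsq
    calc ∑ i, ‖(z - w) i‖^2 ≤ ∑ _i : Fin n, h / n := by
          refine Finset.sum_le_sum fun i _ => ?_
          have hd := hw i
          rw [Metric.mem_ball] at hd
          have habs : ‖(z - w) i‖ = dist (w i) (z i) := by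
            rw [Complex.dist_eq, Pi.sub_apply, ← norm_neg, neg_sub]
          rw [habs]
          nlinarith [Real.sq_sqrt (show (0:ℝ) ≤ h/n by positivity),
            Real.sqrt_nonneg (h/n), dist_nonneg (x := w i) (y := z i)]
      _ = h := by
          rw [Finset.sum_const, Finset.card_univ, Fintype.card_fin, nsmul_eq_mul]
          field_simp
  · obtain ⟨h1, h2⟩ := hs
    simp only at h1 h2
    nlinarith

lemma Tset_subset_ball {n : ℕ} (hn : 1 ≤ n) (z : Fin n → ℂ) (t h : ℝ) (hh : 0 < h) :
    Tset z t h ⊆ {y : (Fin n → ℂ) × ℝ | hGauge (z, t) y < Real.sqrt h} := by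
  intro p hp
  obtain ⟨hnsq, hs2⟩ := Tset_bounds hn z t h hh hp
  show hGauge (z, t) p < Real.sqrt h
  unfold hGauge
  have hlt : (1/16) * nsq ((z, t).1 - p.1)^2 + ((z, t).2 - p.2 + (1/2)*hIm (z, t).1 p.1)^2
      < h^2 := by
    simp only
    nlinarith [nsq_nonneg (z - p.1)]
  calc ((1/16) * nsq ((z, t).1 - p.1)^2 + ((z, t).2 - p.2 + (1/2)*hIm (z, t).1 p.1)^2)
        ^ ((1:ℝ)/4) < (h^2) ^ ((1:ℝ)/4) := by
        refine Real.rpow_lt_rpow (by positivity) hlt (by norm_num)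
    _ = Real.sqrt h := by
        rw [← Real.rpow_natCast h 2, ← Real.rpow_mul hh.le, Real.sqrt_eq_rpow]
        norm_num

lemma dParam4_le_Tset {n : ℕ} (hn : 1 ≤ n) (z : Fin n → ℂ) (t h : ℝ) (hh : 0 < h)
    {p : (Fin n → ℂ) × ℝ} (hp : p ∈ Tset z t h) :
    dParam4 z t h p.1 p.2 ≤ 19 * h^2 := by
  obtain ⟨hnsq, hs2⟩ := Tset_bounds hn z t h hh hp
  unfold dParam4
  nlinarith [nsq_nonneg (z - p.1)]

/-- if ζ has parametrized coordinates [z,t,h] with h > 0, and A contains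
    the gauge ball B([z,t],h^{1/2}), then the Poisson integral of the indicator of A,
    ∫_{Ψ⁻¹(A)} P(ζ,ω) dH_{2n+1}(ω) = ∫_A h^{n+1}/d([z,t,h],[w,s])^{4(n+1)} dH_{2n+1},
    is bounded below by a dimensional constant c > 0. -/
theorem stmt13 (n : ℕ) (hn : 1 ≤ n) :
    ∃ c : ℝ, 0 < c ∧
      ∀ (z : Fin n → ℂ) (t h : ℝ), 0 < h →
        ∀ A : Set ((Fin n → ℂ) × ℝ), MeasurableSet A →
          {y : (Fin n → ℂ) × ℝ | hGauge (z, t) y < Real.sqrt h} ⊆ A →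
          c ≤ ∫ ws in A, h ^ (n + 1) / dParam4 z t h ws.1 ws.2 ^ (n + 1) := by
  have hnR : (0:ℝ) < n := by exact_mod_cast hn
  refine ⟨Real.pi ^ n / ((n:ℝ)^n * 19^(n+1)), div_pos (pow_pos Real.pi_pos n)
    (mul_pos (pow_pos hnR n) (by positivity)), ?_⟩
  intro z t h hh A hA hBA
  have hfi : Integrable (fun p : (Fin n → ℂ) × ℝ => h ^ (n+1) / dParam4 z t h p.1 p.2 ^ (n+1)) :=
    integrable_poisson z t h hh
  have hf0 : ∀ p : (Fin n → ℂ) × ℝ, 0 ≤ h ^ (n+1) / dParam4 z t h p.1 p.2 ^ (n+1) := by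
    intro p
    have := dParam4_pos z t h p.1 p.2 hh
    positivity
  have hTsub : Tset z t h ⊆ A := fun p hp => hBA (Tset_subset_ball hn z t h hh hp)
  have hTm := measurableSet_Tset z t h
  have hvol := volume_Tset z t h hh
  have hvollt : volume (Tset z t h) < ⊤ := by
    rw [hvol]
    exact ENNReal.mul_lt_top ENNReal.ofReal_lt_top
      (ENNReal.pow_lt_top (ENNReal.mul_lt_top ENNReal.ofReal_lt_top ENNReal.coe_lt_top))
  have hlow : ∀ p ∈ Tset z t h,
      h^(n+1)/(19*h^2)^(n+1) ≤ h ^ (n+1) / dParam4 z t h p.1 p.2 ^ (n+1) := by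
    intro p hp
    have hDpos := dParam4_pos z t h p.1 p.2 hh
    have hDle := dParam4_le_Tset hn z t h hh hp
    gcongr
  have step1 : ∫ p in Tset z t h, h ^ (n+1) / dParam4 z t h p.1 p.2 ^ (n+1)
      ≤ ∫ p in A, h ^ (n+1) / dParam4 z t h p.1 p.2 ^ (n+1) :=
    setIntegral_mono_set hfi.integrableOn (Filter.Eventually.of_forall hf0)
      (HasSubset.Subset.eventuallyLE hTsub)
  have step2 : ∫ _p in Tset z t h, (h^(n+1)/(19*h^2)^(n+1) : ℝ)
      ≤ ∫ p in Tset z t h, h ^ (n+1) / dParam4 z t h p.1 p.2 ^ (n+1) :=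
    setIntegral_mono_on (integrableOn_const hvollt.ne) hfi.integrableOn hTm hlow
  have step3 : ∫ _p in Tset z t h, (h^(n+1)/(19*h^2)^(n+1) : ℝ)
      = (volume (Tset z t h)).toReal * (h^(n+1)/(19*h^2)^(n+1)) := by
    rw [setIntegral_const, smul_eq_mul, measureReal_def]
  have htr : (volume (Tset z t h)).toReal = h * ((h/n) * Real.pi)^n := by
    rw [hvol, ENNReal.toReal_mul, ENNReal.toReal_pow, ENNReal.toReal_mul,
      ENNReal.toReal_ofReal hh.le, ENNReal.toReal_ofReal (by positivity),
      ENNReal.coe_toReal, NNReal.coe_real_pi]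
  have hfinal : Real.pi ^ n / ((n:ℝ)^n * 19^(n+1))
      = (volume (Tset z t h)).toReal * (h^(n+1)/(19*h^2)^(n+1)) := by
    rw [htr, mul_pow, div_pow, mul_pow]
    have h0 : h ≠ 0 := hh.ne'
    have hn0 : (n:ℝ) ≠ 0 := hnR.ne'
    field_simp
    ring
  rw [hfinal]
  calc (volume (Tset z t h)).toReal * (h^(n+1)/(19*h^2)^(n+1))
      = ∫ _p in Tset z t h, (h^(n+1)/(19*h^2)^(n+1) : ℝ) := step3.symm
    _ ≤ ∫ p in Tset z t h, h ^ (n+1) / dParam4 z t h p.1 p.2 ^ (n+1) := step2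
    _ ≤ ∫ p in A, h ^ (n+1) / dParam4 z t h p.1 p.2 ^ (n+1) := step1
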